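/- Let (W,S) be a Coxeter system with Coxeter matrix m and let T ⊆ S be such that for every t ∈ T and s ∈ S∖T the exponent m_{st} is even or ∞. Then the kernel of φ_T is generated by the set S_T = {w t w⁻¹ : t ∈ T, w ∈ W_{S∖T}} of all conjugates of elements of T by elements of the standard parabolic subgroup W_{S∖T}. -/

import Mathlib

/-- Under the evenness assumption on `T ⊆ S`, the kernel of the retraction `φ_T` is generated by
the set `S_T` of all conjugates of simple generators from `T` by elements of the standard
parabolic subgroup `W_{S∖T}`. -/
theorem ker_retraction_eq_closure_conjugates {B W : Type*} [Group W] (M : CoxeterMatrix B)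
    (cs : CoxeterSystem M W) (T : Set B)
    (heven : ∀ t ∈ T, ∀ s ∉ T, Even (M t s))
    (φ : W →* W)
    (hφ₁ : ∀ s ∉ T, φ (cs.simple s) = cs.simple s)
    (hφ₂ : ∀ t ∈ T, φ (cs.simple t) = 1) :
    φ.ker = Subgroup.closure
      {x : W | ∃ t ∈ T, ∃ w ∈ Subgroup.closure (cs.simple '' Tᶜ),
        x = w * cs.simple t * w⁻¹} := by
  set P : Subgroup W := Subgroup.closure (cs.simple '' Tᶜ) with hP
  set K : Subgroup W := Subgroup.closure
      {x : W | ∃ t ∈ T, ∃ w ∈ P, x = w * cs.simple t * w⁻¹} with hK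
  -- simples from T are in K
  have hTK : ∀ t ∈ T, cs.simple t ∈ K := by
    intro t ht
    apply Subgroup.subset_closure
    exact ⟨t, ht, 1, one_mem _, by simp⟩
  -- φ fixes P pointwise
  have hφP : ∀ u ∈ P, φ u = u := by
    intro u hu
    induction hu using Subgroup.closure_induction with
    | mem x hx => obtain ⟨s, hs, rfl⟩ := hx; exact hφ₁ s hs
    | one => simp
    | mul x y _ _ hx hy => simp [hx, hy]
    | inv x _ hx => simp [hx]
  -- K ≤ ker φ
  have hKker : K ≤ φ.ker := by
    rw [hK, Subgroup.closure_le]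
    rintro x ⟨t, ht, w, hw, rfl⟩
    simp [MonoidHom.mem_ker, hφ₂ t ht]
  -- conjugation by a simple preserves K
  have hconj : ∀ s : B, ∀ n ∈ K, cs.simple s * n * (cs.simple s)⁻¹ ∈ K := by
    intro s n hn
    induction hn using Subgroup.closure_induction with
    | mem x hx =>
      obtain ⟨t, ht, w, hw, rfl⟩ := hx
      by_cases hs : s ∈ T
      · exact mul_mem (mul_mem (hTK s hs)
          (Subgroup.subset_closure ⟨t, ht, w, hw, rfl⟩)) (inv_mem (hTK s hs))
      · apply Subgroup.subset_closure
        refine ⟨t, ht, cs.simple s * w, mul_mem (Subgroup.subset_closure ⟨s, hs, rfl⟩) hw, ?_⟩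
        group
    | one => simp [one_mem]
    | mul x y _ _ hx hy =>
      have : cs.simple s * (x * y) * (cs.simple s)⁻¹
          = (cs.simple s * x * (cs.simple s)⁻¹) * (cs.simple s * y * (cs.simple s)⁻¹) := by group
      rw [this]; exact mul_mem hx hy
    | inv x _ hx =>
      have : cs.simple s * x⁻¹ * (cs.simple s)⁻¹
          = (cs.simple s * x * (cs.simple s)⁻¹)⁻¹ := by group
      rw [this]; exact inv_mem hx
  -- K is normal
  have hnorm : K.Normal := by
    constructor
    intro n hn g
    have hg : g ∈ Subgroup.normalizer (K : Set W) := by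
      have : (⊤ : Subgroup W) ≤ Subgroup.normalizer (K : Set W) := by
        rw [← cs.subgroup_closure_range_simple, Subgroup.closure_le]
        rintro _ ⟨s, rfl⟩
        rw [SetLike.mem_coe, Subgroup.mem_normalizer_iff]
        intro h
        constructor
        · intro hh
          have := hconj s h hh
          simpa [mul_assoc] using this
        · intro hh
          have h2 := hconj s _ hh
          have hss : cs.simple s * cs.simple s = 1 := by
            simpa using cs.simple_mul_simple_self s
          have heq : cs.simple s * (cs.simple s * h * (cs.simple s)⁻¹) * (cs.simple s)⁻¹ = h := by
            calc cs.simple s * (cs.simple s * h * (cs.simple s)⁻¹) * (cs.simple s)⁻¹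
                = (cs.simple s * cs.simple s) * h * (cs.simple s * cs.simple s)⁻¹ := by group
              _ = h := by rw [hss]; simp
          rwa [heq] at h2
      exact this trivial
    rw [Subgroup.mem_normalizer_iff] at hg
    exact (hg n).mp hn
  -- K ⊔ P = ⊤
  have hsup : K ⊔ P = ⊤ := by
    rw [eq_top_iff, ← cs.subgroup_closure_range_simple, Subgroup.closure_le]
    rintro _ ⟨s, rfl⟩
    by_cases hs : s ∈ T
    · exact Subgroup.mem_sup_left (hTK s hs)
    · exact Subgroup.mem_sup_right (Subgroup.subset_closure ⟨s, hs, rfl⟩)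
  apply le_antisymm _ hKker
  intro w hw
  have : w ∈ (↑(K ⊔ P) : Set W) := by rw [hsup]; trivial
  rw [Subgroup.normal_mul] at this
  obtain ⟨n, hn, u, hu, rfl⟩ := this
  have h1 : φ n = 1 := hKker hn
  have h2 : φ (n * u) = 1 := hw
  rw [map_mul, h1, one_mul, hφP u hu] at h2
  subst h2
  simpa using hn
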